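/- Let x ∈ ℝ^N be fixed, not all coordinates equal, and for τ > 0 define p_i(τ) = exp(x_i/τ)/Σ_j exp(x_j/τ). Then the entropy H(τ) = -Σ_i p_i log p_i is strictly increasing in τ. -/

import Mathlib

open Real Finset

private noncomputable def Zf (N : ℕ) (x : Fin N → ℝ) (b : ℝ) : ℝ := ∑ i, Real.exp (b * x i)
private noncomputable def Z1f (N : ℕ) (x : Fin N → ℝ) (b : ℝ) : ℝ := ∑ i, x i * Real.exp (b * x i)
private noncomputable def Z2f (N : ℕ) (x : Fin N → ℝ) (b : ℝ) : ℝ := ∑ i, x i ^ 2 * Real.exp (b * x i)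
private noncomputable def Bf (N : ℕ) (x : Fin N → ℝ) (b : ℝ) : ℝ :=
  Real.log (Zf N x b) - b * (Z1f N x b / Zf N x b)

private lemma Zf_pos (N : ℕ) (x : Fin N → ℝ) [Nonempty (Fin N)] (b : ℝ) : 0 < Zf N x b :=
  Finset.sum_pos (fun i _ => Real.exp_pos _) Finset.univ_nonempty

private lemma hasDerivAt_Zf (N : ℕ) (x : Fin N → ℝ) (b : ℝ) :
    HasDerivAt (Zf N x) (Z1f N x b) b := by
  have : HasDerivAt (Zf N x) (∑ i : Fin N, Real.exp (b * x i) * x i) b := by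
    apply HasDerivAt.fun_sum
    intro i _
    exact ((hasDerivAt_mul_const (x i)).exp)
  simpa [Z1f, mul_comm] using this

private lemma hasDerivAt_Z1f (N : ℕ) (x : Fin N → ℝ) (b : ℝ) :
    HasDerivAt (Z1f N x) (Z2f N x b) b := by
  have : HasDerivAt (Z1f N x) (∑ i : Fin N, x i * (Real.exp (b * x i) * x i)) b := by
    apply HasDerivAt.fun_sum
    intro i _
    exact ((hasDerivAt_mul_const (x i)).exp).const_mul (x i)
  convert this using 1
  simp [Z2f]; ring_nf
  exact Finset.sum_congr rfl (fun i _ => by ring)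

private lemma var_pos (N : ℕ) (x : Fin N → ℝ) (hx : ∃ i j : Fin N, x i ≠ x j) (b : ℝ) :
    0 < Z2f N x b * Zf N x b - Z1f N x b ^ 2 := by
  have : Nonempty (Fin N) := ⟨hx.choose⟩
  have hZ := Zf_pos N x b
  set μ := Z1f N x b / Zf N x b with hμ
  have hμZ : μ * Zf N x b = Z1f N x b := div_mul_cancel₀ _ hZ.ne'
  have hsum : ∑ i : Fin N, (x i - μ) ^ 2 * Real.exp (b * x i)
      = Z2f N x b - 2 * μ * Z1f N x b + μ ^ 2 * Zf N x b := by
    simp only [Z2f, Z1f, Zf, Finset.mul_sum]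
    rw [← Finset.sum_sub_distrib, ← Finset.sum_add_distrib]
    apply Finset.sum_congr rfl
    intro i _
    ring
  have hne : ∃ i : Fin N, x i ≠ μ := by
    by_contra h
    push_neg at h
    obtain ⟨i, j, hij⟩ := hx
    exact hij ((h i).trans (h j).symm)
  obtain ⟨i, hi⟩ := hne
  have hpos : 0 < ∑ i : Fin N, (x i - μ) ^ 2 * Real.exp (b * x i) := by
    apply Finset.sum_pos' (fun k _ => by positivity)
    refine ⟨i, Finset.mem_univ i, ?_⟩
    have h1 : 0 < (x i - μ) ^ 2 := by
      have := sub_ne_zero.mpr hi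
      positivity
    exact mul_pos h1 (Real.exp_pos _)
  have key : Z2f N x b * Zf N x b - Z1f N x b ^ 2
      = Zf N x b * ∑ i : Fin N, (x i - μ) ^ 2 * Real.exp (b * x i) := by
    rw [hsum]
    have : Zf N x b * (μ ^ 2 * Zf N x b) = Z1f N x b ^ 2 := by
      rw [pow_two, ← hμZ]; ring
    nlinarith [hμZ]
  rw [key]
  exact mul_pos hZ hpos

private lemma hasDerivAt_Bf (N : ℕ) (x : Fin N → ℝ) [Nonempty (Fin N)] (b : ℝ) :
    HasDerivAt (Bf N x)
      (-(b * ((Z2f N x b * Zf N x b - Z1f N x b ^ 2) / Zf N x b ^ 2))) b := by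
  have hZ := Zf_pos N x b
  have h1 : HasDerivAt (fun b => Real.log (Zf N x b)) (Z1f N x b / Zf N x b) b :=
    (hasDerivAt_Zf N x b).log hZ.ne'
  have h2 : HasDerivAt (fun b => Z1f N x b / Zf N x b)
      ((Z2f N x b * Zf N x b - Z1f N x b * Z1f N x b) / Zf N x b ^ 2) b :=
    (hasDerivAt_Z1f N x b).div (hasDerivAt_Zf N x b) hZ.ne'
  have h3 : HasDerivAt (fun b => b * (Z1f N x b / Zf N x b))
      (1 * (Z1f N x b / Zf N x b) +
        b * ((Z2f N x b * Zf N x b - Z1f N x b * Z1f N x b) / Zf N x b ^ 2)) b :=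
    (hasDerivAt_id b).mul h2
  have := h1.sub h3
  convert this using 1
  · rfl
  · rfl
  · rfl
  ring

private lemma Bf_strictAnti (N : ℕ) (x : Fin N → ℝ) (hx : ∃ i j : Fin N, x i ≠ x j) :
    StrictAntiOn (Bf N x) (Set.Ioi (0 : ℝ)) := by
  have : Nonempty (Fin N) := ⟨hx.choose⟩
  apply strictAntiOn_of_deriv_neg (convex_Ioi 0)
  · exact fun b _ => ((hasDerivAt_Bf N x b).continuousAt).continuousWithinAt
  · intro b hb
    rw [interior_Ioi] at hb
    rw [(hasDerivAt_Bf N x b).deriv]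
    have hZ := Zf_pos N x b
    have hv := var_pos N x hx b
    have : 0 < b * ((Z2f N x b * Zf N x b - Z1f N x b ^ 2) / Zf N x b ^ 2) := by
      apply mul_pos hb
      positivity
    linarith

theorem softmax_entropy_strictMono
    (N : ℕ) (x : Fin N → ℝ) (hx : ∃ i j : Fin N, x i ≠ x j)
    (p : ℝ → Fin N → ℝ)
    (hp : ∀ t i, p t i = Real.exp (x i / t) / ∑ j, Real.exp (x j / t))
    (H : ℝ → ℝ)
    (hH : ∀ t, H t = -∑ i, p t i * Real.log (p t i)) :
    StrictMonoOn H (Set.Ioi (0 : ℝ)) := by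
  have : Nonempty (Fin N) := ⟨hx.choose⟩
  have hHB : ∀ t : ℝ, 0 < t → H t = Bf N x (1 / t) := by
    intro t ht
    have hZ := Zf_pos N x (1 / t)
    have hxt : ∀ i : Fin N, x i / t = (1 / t) * x i := by
      intro i; field_simp
    have hZeq : (∑ j, Real.exp (x j / t)) = Zf N x (1 / t) := by
      simp only [Zf, hxt]
    have hlog : ∀ i : Fin N, Real.log (p t i) = (1 / t) * x i - Real.log (Zf N x (1 / t)) := by
      intro i
      rw [hp, hZeq, Real.log_div (Real.exp_ne_zero _) hZ.ne', Real.log_exp, hxt]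
    have hterm : ∀ i : Fin N, p t i * Real.log (p t i)
        = (1 / t) * (x i * Real.exp ((1 / t) * x i)) / Zf N x (1 / t)
          - Real.log (Zf N x (1 / t)) * (Real.exp ((1 / t) * x i) / Zf N x (1 / t)) := by
      intro i
      rw [hlog, hp, hZeq, hxt]
      ring
    rw [hH]
    simp only [hterm]
    rw [Finset.sum_sub_distrib, ← Finset.sum_div, ← Finset.mul_sum, ← Finset.mul_sum,
      ← Finset.sum_div]
    have h1 : (∑ i : Fin N, x i * Real.exp ((1 / t) * x i)) = Z1f N x (1 / t) := rfl
    have h2 : (∑ i : Fin N, Real.exp ((1 / t) * x i)) = Zf N x (1 / t) := rfl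
    rw [h1, h2, Bf]
    field_simp
    ring
  intro s hs t ht hst
  rw [Set.mem_Ioi] at hs ht
  rw [hHB s hs, hHB t ht]
  apply Bf_strictAnti N x hx
  · exact Set.mem_Ioi.mpr (by positivity)
  · exact Set.mem_Ioi.mpr (by positivity)
  · exact one_div_lt_one_div_of_lt hs hst
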